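/- In the n-bank single-asset clearing system, consider an interval of time during which exactly the banks 1, …, k are at the regulatory threshold (i.e., θ_i(t) ≤ θ_min if and only if i ≤ k) and Γ_i(t) = 0 for i > k. Then the aggregate liquidation process Γ*(t) = Σ_{i=1}^n Γ_i(t) = Σ_{i=1}^k Γ_i(t) satisfies on this interval the single-bank ODE Γ̇*(t) = −Z*_k(t, Γ*(t)) f_t′(t) f_Γ(Γ*(t)) / (1 + Z*_k(t, Γ*(t)) f_t(t) f_Γ′(Γ*(t))), where Z*_k(t, Γ*) = ((1 − α θ_min)(Σ_{i=1}^k s_i − Γ*))/(α θ_min f_t(t) f_Γ(Γ*)), i.e., the aggregate behaves like a single bank holding Σ_{i=1}^k s_i units. -/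

import Mathlib

open Set Matrix

noncomputable section

lemma vecMulVec_mulVec' {n : ℕ} (u w : Fin n → ℝ) :
    (vecMulVec u (fun _ : Fin n => (1:ℝ))).mulVec w = (∑ j, w j) • u := by
  funext i
  simp [vecMulVec, mulVec, dotProduct, Finset.mul_sum, mul_comm]

lemma vecMulVec_sq {n : ℕ} (u : Fin n → ℝ) :
    (vecMulVec u (fun _ : Fin n => (1:ℝ))) * (vecMulVec u (fun _ : Fin n => (1:ℝ)))
      = (∑ j, u j) • vecMulVec u (fun _ : Fin n => (1:ℝ)) := by
  ext i j
  simp [vecMulVec, Matrix.mul_apply, Finset.mul_sum, mul_comm]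

-- Sherman-Morrison style: sum of -(M⁻¹ mulVec w) where w = a • u
lemma key {n : ℕ} (u : Fin n → ℝ) (c a : ℝ) :
    ∑ i, (-(((1 : Matrix (Fin n) (Fin n) ℝ) + c • vecMulVec u (fun _ => 1))⁻¹).mulVec
        (fun i => u i * a) : Fin n → ℝ) i
      = -((∑ j, u j) * a) / (1 + c * (∑ j, u j)) := by
  set S := ∑ j, u j with hS
  set A := vecMulVec u (fun _ : Fin n => (1:ℝ)) with hA
  set M := (1 : Matrix (Fin n) (Fin n) ℝ) + c • A with hM
  by_cases h1 : 1 + c * S = 0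
  · -- M singular: M.mulVec u = 0 and u ≠ 0
    have hSne : S ≠ 0 := by intro h; rw [h, mul_zero] at h1; norm_num at h1
    have hune : u ≠ 0 := by intro h; apply hSne; simp [hS, h]
    have hMu : M.mulVec u = 0 := by
      have : M.mulVec u = (1 + c * S) • u := by
        rw [hM, add_mulVec, one_mulVec, smul_mulVec, hA, vecMulVec_mulVec', ← hS,
          smul_smul]
        module
      rw [this, h1, zero_smul]
    have hMinv : M⁻¹ = 0 := by
      apply Matrix.nonsing_inv_apply_not_isUnit
      intro hdet
      apply hune
      calc u = (M⁻¹ * M).mulVec u := by rw [Matrix.nonsing_inv_mul M hdet, one_mulVec]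
        _ = M⁻¹.mulVec (M.mulVec u) := by rw [← mulVec_mulVec]
        _ = 0 := by rw [hMu, mulVec_zero]
    rw [hMinv, h1]
    simp
  · set d := c / (1 + c * S) with hd
    have hMN : M * ((1 : Matrix (Fin n) (Fin n) ℝ) - d • A) = 1 := by
      have expand : M * ((1 : Matrix (Fin n) (Fin n) ℝ) - d • A)
          = 1 + (c - d - c * d * S) • A := by
        have hMA : M * A = A + (c * S) • A := by
          rw [hM, add_mul, one_mul, smul_mul_assoc, hA, vecMulVec_sq, ← hS, ← hA, smul_smul]
        rw [mul_sub, mul_one, mul_smul_comm, hMA, hM]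
        module
      rw [expand]
      have : c - d - c * d * S = 0 := by
        rw [hd]; field_simp; ring
      rw [this, zero_smul, add_zero]
    have hMinv : M⁻¹ = (1 : Matrix (Fin n) (Fin n) ℝ) - d • A :=
      Matrix.inv_eq_right_inv hMN
    rw [hMinv]
    have : (((1 : Matrix (Fin n) (Fin n) ℝ) - d • A).mulVec (fun i => u i * a))
        = (fun i => u i * a) - (d * (S * a)) • u := by
      rw [sub_mulVec, one_mulVec, smul_mulVec, hA, vecMulVec_mulVec']
      have : (∑ j, u j * a) = S * a := by rw [hS, Finset.sum_mul]
      rw [this, smul_smul]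
    rw [this]
    simp only [Pi.sub_apply, Pi.neg_apply, Pi.smul_apply, smul_eq_mul]
    rw [Finset.sum_neg_distrib]
    rw [Finset.sum_sub_distrib, ← Finset.sum_mul, ← Finset.mul_sum, ← hS]
    rw [hd]
    field_simp
    ring_nf
    have h1' : 1 + S * c ≠ 0 := by rwa [mul_comm S c]
    field_simp
    ring


/-- **Aggregation (proof of Corollary 3.8).**
On a time interval during which exactly the banks `1, …, k` are at the regulatory
threshold (and the remaining banks have not liquidated anything), the aggregate
liquidation process `Γ*(t) = Σᵢ Γᵢ(t)` satisfies the single-bank ODE of a bank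
holding `Σ_{i≤k} sᵢ` units.  (Bank `i : Fin n` corresponds to bank `i+1` of the
paper, so "banks `1, …, k`" are the indices with `(i : ℕ) < k`.) -/
theorem aggregate_single_bank_ODE
    (n k : ℕ) (hn : 0 < n) (hk : k ≤ n)
    (t₁ t₂ α θmin : ℝ) (ht : t₁ ≤ t₂)
    (s : Fin n → ℝ) (hs : ∀ i, 0 < s i)
    (hθmin : 0 < θmin) (hα : 0 < α) (hαθ : α * θmin < 1)
    (ft fΓ : ℝ → ℝ)
    (hftC : ContDiff ℝ 1 ft) (hftanti : AntitoneOn ft (Ici 0))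
    (hftmem : ∀ t ∈ Ici (0 : ℝ), ft t ∈ Ioc (0 : ℝ) 1) (hft0 : ft 0 = 1)
    (hfΓC : ContDiff ℝ 2 fΓ) (hfΓanti : Antitone fΓ)
    (hfΓpos : ∀ γ, 0 < fΓ γ) (hfΓ0 : fΓ 0 = 1)
    -- the capital ratios: on `[t₁, t₂]` exactly banks `1, …, k` are at the threshold
    (θ : ℝ → Fin n → ℝ)
    (hθ : ∀ t ∈ Icc t₁ t₂, ∀ i : Fin n, (θ t i ≤ θmin ↔ (i : ℕ) < k))
    -- the solution of the `n`-bank clearing ODE on `[t₁, t₂]`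
    (Γ : ℝ → Fin n → ℝ)
    -- the map `Z` (with the regulatory-threshold indicators)
    (Z : ℝ → Fin n → ℝ)
    (hZ : ∀ t i, Z t i =
      if θ t i ≤ θmin
      then ((1 - α * θmin) * (s i - Γ t i)) / (α * θmin * ft t * fΓ (∑ j, Γ t j))
      else 0)
    -- banks that are not at the threshold have not liquidated anything
    (hΓ0 : ∀ t ∈ Icc t₁ t₂, ∀ i : Fin n, k ≤ (i : ℕ) → Γ t i = 0)
    (hODE : ∀ t ∈ Icc t₁ t₂, HasDerivAt Γ
      (-(((1 : Matrix (Fin n) (Fin n) ℝ) +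
          (ft t * deriv fΓ (∑ j, Γ t j)) • vecMulVec (Z t) (fun _ => 1))⁻¹).mulVec
        (fun i => Z t i * deriv ft t * fΓ (∑ j, Γ t j)) : Fin n → ℝ) t) :
    -- the aggregate `Γ*(t) = Σᵢ Γᵢ(t)` solves the single-bank ODE of a bank
    -- holding `Σ_{i ≤ k} sᵢ` units
    ∀ t ∈ Icc t₁ t₂, HasDerivAt (fun u => ∑ i, Γ u i)
      (-((((1 - α * θmin) *
            ((∑ i ∈ Finset.univ.filter (fun i : Fin n => (i : ℕ) < k), s i) -
              ∑ i, Γ t i)) /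
          (α * θmin * ft t * fΓ (∑ i, Γ t i))) * deriv ft t * fΓ (∑ i, Γ t i)) /
        (1 + (((1 - α * θmin) *
            ((∑ i ∈ Finset.univ.filter (fun i : Fin n => (i : ℕ) < k), s i) -
              ∑ i, Γ t i)) /
          (α * θmin * ft t * fΓ (∑ i, Γ t i))) * ft t * deriv fΓ (∑ i, Γ t i))) t := by
  intro t htt
  -- the sum of the Z's equals the aggregate Z*
  have hsum : ∑ i, Z t i =
      ((1 - α * θmin) *
          ((∑ i ∈ Finset.univ.filter (fun i : Fin n => (i : ℕ) < k), s i) -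
            ∑ i, Γ t i)) /
        (α * θmin * ft t * fΓ (∑ i, Γ t i)) := by
    have h1 : ∀ i : Fin n, Z t i =
        if (i : ℕ) < k
        then ((1 - α * θmin) * (s i - Γ t i)) / (α * θmin * ft t * fΓ (∑ j, Γ t j))
        else 0 := by
      intro i
      rw [hZ t i]
      by_cases h : (i : ℕ) < k
      · rw [if_pos ((hθ t htt i).2 h), if_pos h]
      · rw [if_neg (fun hle => h ((hθ t htt i).1 hle)), if_neg h]
    rw [Finset.sum_congr rfl (fun i _ => h1 i), ← Finset.sum_filter]
    have hΓsum : ∑ i ∈ Finset.univ.filter (fun i : Fin n => (i : ℕ) < k), Γ t i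
        = ∑ i, Γ t i := by
      apply Finset.sum_subset (Finset.filter_subset _ _)
      intro i _ hi
      exact hΓ0 t htt i (le_of_not_gt (by simpa using hi))
    rw [← Finset.sum_div, ← hΓsum, ← Finset.sum_sub_distrib, ← Finset.mul_sum]
  -- the derivative of the aggregate
  have hder := hODE t htt
  have hcomp : ∀ i : Fin n, HasDerivAt (fun u => Γ u i)
      ((-(((1 : Matrix (Fin n) (Fin n) ℝ) +
          (ft t * deriv fΓ (∑ j, Γ t j)) • vecMulVec (Z t) (fun _ => 1))⁻¹).mulVec
        (fun i => Z t i * deriv ft t * fΓ (∑ j, Γ t j)) : Fin n → ℝ) i) t :=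
    hasDerivAt_pi.1 hder
  have hder2 := HasDerivAt.sum (u := Finset.univ) (fun i _ => hcomp i)
  convert hder2 using 1
  · exact rfl
  · exact rfl
  · funext u; simp [Finset.sum_apply]
  have hw : (fun i => Z t i * deriv ft t * fΓ (∑ j, Γ t j))
      = fun i => Z t i * (deriv ft t * fΓ (∑ j, Γ t j)) := by
    funext i; ring
  rw [hw, key (Z t) (ft t * deriv fΓ (∑ j, Γ t j)) (deriv ft t * fΓ (∑ j, Γ t j)),
    ← hsum]
  ring
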